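/- Let F be a finite field with q elements, k a field with q invertible in k, M_n the monoid of n×n matrices over F, and G_{n,r} the groupoid whose objects are r-dimensional subspaces of F^n and morphisms are linear isomorphisms. Define ψ_r : k[M_n] → k[G_{n,r}] by ψ_r([m]) = Σ_U [m|_U], summed over r-dimensional subspaces U with dim m(U) = r, where m|_U : U → m(U). Then ψ_r is a homomorphism of k-algebras. -/

import Mathlib

open scoped Classical

section

variable (F : Type*) [Field F] (n r : ℕ)

/-- The objects of the groupoid `G_{n,r}`: `r`-dimensional subspaces of `F^n`. -/
def GrObj := {U : Submodule F (Fin n → F) // Module.finrank F ↥U = r}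

/-- The morphisms of the groupoid `G_{n,r}`: linear isomorphisms between
`r`-dimensional subspaces of `F^n`. -/
def GrMor := Σ U V : GrObj F n r, (↥U.1 ≃ₗ[F] ↥V.1)

/-- The restriction of a linear endomorphism `φ` of `F^n` to an isomorphism
`U ≃ φ(U)`, when `dim φ(U) = dim U`. -/
noncomputable def resEquiv (φ : (Fin n → F) →ₗ[F] (Fin n → F))
    (U : Submodule F (Fin n → F))
    (h : Module.finrank F ↥(U.map φ) = Module.finrank F ↥U) :
    ↥U ≃ₗ[F] ↥(U.map φ) :=
  LinearEquiv.ofBijective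
    ((φ.domRestrict U).codRestrict (U.map φ) fun x => Submodule.mem_map_of_mem x.2)
    (by
      have hsurj : Function.Surjective
          ((φ.domRestrict U).codRestrict (U.map φ) fun x => Submodule.mem_map_of_mem x.2) := by
        rintro ⟨y, hy⟩
        obtain ⟨x, hx, rfl⟩ := hy
        exact ⟨⟨x, hx⟩, rfl⟩
      exact ⟨(LinearMap.injective_iff_surjective_of_finrank_eq_finrank h.symm).mpr hsurj,
        hsurj⟩)

/-- The value of the map `ψ_r` on the basis element `[m]`:
`ψ_r([m]) = ∑_U [m|_U]`, summed over `r`-dimensional subspaces `U ⊆ F^n` with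
`dim m(U) = r`. -/
noncomputable def psiVal (k : Type*) [Field k] (B : Type*) [Ring B] [Algebra k B]
    (b : Module.Basis (GrMor F n r) k B) (m : Matrix (Fin n) (Fin n) F) : B :=
  ∑ᶠ U : GrObj F n r,
    if h : Module.finrank F ↥(U.1.map m.mulVecLin) = r then
      b ⟨U, ⟨U.1.map m.mulVecLin, h⟩,
        resEquiv F n m.mulVecLin U.1 (h.trans U.2.symm)⟩
    else 0

/-- The linear map `ψ_r : k[M_n] → k[G_{n,r}]`, defined on the basis by
`ψ_r([m]) = ∑_U [m|_U]`. -/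
noncomputable def psiMap (k : Type*) [Field k] (B : Type*) [Ring B] [Algebra k B]
    (b : Module.Basis (GrMor F n r) k B) :
    MonoidAlgebra k (Matrix (Fin n) (Fin n) F) →ₗ[k] B :=
  Finsupp.lift B k (Matrix (Fin n) (Fin n) F) (psiVal F n r k B b) ∘ₗ
    (MonoidAlgebra.coeffLinearEquiv k).toLinearMap

end


section Aux
variable {F : Type*} [Field F] {n r : ℕ}

lemma resEquiv_coe (φ : (Fin n → F) →ₗ[F] (Fin n → F)) (U : Submodule F (Fin n → F))
    (h : Module.finrank F ↥(U.map φ) = Module.finrank F ↥U) (x : ↥U) :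
    (resEquiv F n φ U h x : Fin n → F) = φ x := rfl

lemma grmor_eq {U V V' : GrObj F n r} (h : V = V')
    (f : ↥U.1 ≃ₗ[F] ↥V.1) (g : ↥U.1 ≃ₗ[F] ↥V'.1)
    (hfg : ∀ x : ↥U.1, ((f x : Fin n → F)) = (g x : Fin n → F)) :
    (⟨U, V, f⟩ : GrMor F n r) = ⟨U, V', g⟩ := by
  subst h
  have : f = g := LinearEquiv.ext fun x => Subtype.ext (hfg x)
  rw [this]

lemma grobj_finite [Fintype F] : Finite (GrObj F n r) := by
  have : Finite (Submodule F (Fin n → F)) :=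
    Finite.of_injective (fun p => (p : Set (Fin n → F))) SetLike.coe_injective
  exact Subtype.finite

variable [Fintype F] {k : Type*} [Field k] {B : Type*} [Ring B] [Algebra k B]
  (b : Module.Basis (GrMor F n r) k B)
  (hmul : ∀ (U V U' V' : GrObj F n r)
      (f : ↥U.1 ≃ₗ[F] ↥V.1) (g : ↥U'.1 ≃ₗ[F] ↥V'.1),
      b ⟨U', V', g⟩ * b ⟨U, V, f⟩ =
        if h : V = U' then
          b ⟨U, V', f.trans ((LinearEquiv.ofEq V.1 U'.1 (congrArg Subtype.val h)).trans g)⟩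
        else 0)

include hmul

lemma psiVal_left_id (i : GrMor F n r) :
    psiVal F n r k B b 1 * b i = b i := by
  haveI : Finite (GrObj F n r) := grobj_finite
  haveI : Fintype (GrObj F n r) := Fintype.ofFinite _
  obtain ⟨U, V, f⟩ := i
  rw [psiVal, finsum_eq_sum_of_fintype, Finset.sum_mul]
  have hc : ∀ W : GrObj F n r,
      Module.finrank F ↥(W.1.map (1 : Matrix (Fin n) (Fin n) F).mulVecLin) = r := by
    intro W
    rw [Matrix.mulVecLin_one, Submodule.map_id]
    exact W.2
  rw [Finset.sum_congr rfl (fun W _ => by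
    erw [dif_pos (hc W), hmul])]
  rw [Finset.sum_eq_single V]
  · rw [dif_pos rfl]
    congr 1
    refine grmor_eq (V' := V) ?_ _ f ?_
    · refine Subtype.ext ?_
      show Submodule.map (Matrix.mulVecLin 1) V.1 = V.1
      rw [Matrix.mulVecLin_one, Submodule.map_id]
    · intro x
      simp [resEquiv_coe, Matrix.mulVecLin_one]
  · intro W _ hW
    rw [dif_neg (fun h => hW h.symm)]
  · intro h
    exact absurd (Finset.mem_univ V) h

lemma psiVal_mul (m m' : Matrix (Fin n) (Fin n) F) :
    psiVal F n r k B b (m * m') = psiVal F n r k B b m * psiVal F n r k B b m' := by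
  haveI : Finite (GrObj F n r) := grobj_finite
  haveI : Fintype (GrObj F n r) := Fintype.ofFinite _
  rw [psiVal, psiVal, psiVal, finsum_eq_sum_of_fintype, finsum_eq_sum_of_fintype,
    finsum_eq_sum_of_fintype, Finset.sum_mul_sum, Finset.sum_comm]
  refine Finset.sum_congr rfl fun U _ => ?_
  have hmap : U.1.map (m * m').mulVecLin
      = (U.1.map m'.mulVecLin).map m.mulVecLin := by
    rw [Matrix.mulVecLin_mul, Submodule.map_comp]
  by_cases h' : Module.finrank F ↥(U.1.map m'.mulVecLin) = r
  · set W0 : GrObj F n r := ⟨U.1.map m'.mulVecLin, h'⟩ with hW0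
    rw [Finset.sum_eq_single W0]
    · rw [dif_pos h']
      by_cases h'' : Module.finrank F ↥(W0.1.map m.mulVecLin) = r
      · rw [dif_pos h'']; erw [hmul, dif_pos rfl]
        have hcond : Module.finrank F ↥(U.1.map (m * m').mulVecLin) = r := by
          rw [hmap]; exact h''
        rw [dif_pos hcond]
        congr 1
        refine grmor_eq ?_ _ _ ?_
        · exact Subtype.ext hmap
        · intro x
          simp only [LinearEquiv.trans_apply, resEquiv_coe, LinearEquiv.coe_ofEq_apply,
            Matrix.mulVecLin_mul, LinearMap.comp_apply]
      · rw [dif_neg h'', zero_mul]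
        have hcond : ¬ Module.finrank F ↥(U.1.map (m * m').mulVecLin) = r := by
          rw [hmap]; exact h''
        rw [dif_neg hcond]
    · intro W _ hW
      rw [dif_pos h']
      by_cases hWm : Module.finrank F ↥(W.1.map m.mulVecLin) = r
      · rw [dif_pos hWm]; erw [hmul]; rw [dif_neg (by
          intro h; exact hW (by rw [← h]))]
      · rw [dif_neg hWm, zero_mul]
    · intro h
      exact absurd (Finset.mem_univ W0) h
  · rw [dif_neg h']
    have hlt : Module.finrank F ↥(U.1.map m'.mulVecLin) < r := by
      refine lt_of_le_of_ne ?_ h'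
      calc Module.finrank F ↥(U.1.map m'.mulVecLin)
          ≤ Module.finrank F ↥U.1 := Submodule.finrank_map_le _ _
        _ = r := U.2
    have hcond : ¬ Module.finrank F ↥(U.1.map (m * m').mulVecLin) = r := by
      rw [hmap]
      have : Module.finrank F ↥((U.1.map m'.mulVecLin).map m.mulVecLin)
          ≤ Module.finrank F ↥(U.1.map m'.mulVecLin) := Submodule.finrank_map_le _ _
      omega
    rw [dif_neg hcond]
    simp

lemma psiVal_one : psiVal F n r k B b 1 = 1 := by
  have h1 : LinearMap.mulLeft k (psiVal F n r k B b 1) = LinearMap.id :=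
    b.ext fun i => by
      simpa using psiVal_left_id b hmul i
  have := congrArg (fun f : B →ₗ[k] B => f 1) h1
  simpa using this

end Aux

/-- Let `F` be a finite field with `q` elements invertible in the field `k`, and
let `B` be a `k`-algebra presenting the groupoid algebra `k[G_{n,r}]`: it has a
basis indexed by the isomorphisms `f : U → V` between `r`-dimensional subspaces
of `F^n`, with products of basis elements given by composition when defined and
`0` otherwise.  Then `ψ_r : k[M_n] → B`, `[m] ↦ ∑_U [m|_U]`, is a homomorphism
of `k`-algebras. -/
theorem psiMap_algHom (F : Type*) [Field F] [Fintype F] (n r : ℕ)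
    (k : Type*) [Field k] (hq : (Fintype.card F : k) ≠ 0)
    (B : Type*) [Ring B] [Algebra k B]
    (b : Module.Basis (GrMor F n r) k B)
    (hmul : ∀ (U V U' V' : GrObj F n r)
      (f : ↥U.1 ≃ₗ[F] ↥V.1) (g : ↥U'.1 ≃ₗ[F] ↥V'.1),
      b ⟨U', V', g⟩ * b ⟨U, V, f⟩ =
        if h : V = U' then
          b ⟨U, V', f.trans ((LinearEquiv.ofEq V.1 U'.1 (congrArg Subtype.val h)).trans g)⟩
        else 0) :
    psiMap F n r k B b 1 = 1 ∧
      ∀ x y : MonoidAlgebra k (Matrix (Fin n) (Fin n) F),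
        psiMap F n r k B b (x * y) = psiMap F n r k B b x * psiMap F n r k B b y := by
  let phi : Matrix (Fin n) (Fin n) F →* B :=
    { toFun := psiVal F n r k B b
      map_one' := psiVal_one b hmul
      map_mul' := fun m m' => psiVal_mul b hmul m m' }
  have hpsi : ∀ x, psiMap F n r k B b x = MonoidAlgebra.lift k B _ phi x := by
    intro x
    rw [MonoidAlgebra.lift_apply, psiMap]
    exact Finsupp.lift_apply B k _ (psiVal F n r k B b) x.coeff
  constructor
  · rw [hpsi]; exact map_one _
  · intro x y
    rw [hpsi, hpsi, hpsi]; exact map_mul _ x y
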